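/- Fix a channel coefficient h ∈ ℂ with h ≠ 0 and constants a > 0, b > 0, and set f_opt = (1 + σw²/(σx²·|h|²)) · x/‖x‖². Then f_opt minimizes the zeroth-order error probability: for every nonzero filter f ∈ ℂ^B, P0(f_opt) ≤ P0(f). -/

import Mathlib

open MeasureTheory

/-- `φ(f) = fᴴ x = Σᵢ conj(fᵢ)·xᵢ`. -/
noncomputable def phi {B : ℕ} (x f : Fin B → ℂ) : ℂ :=
  ∑ i, (starRingEnd ℂ) (f i) * x i

/-- Squared Euclidean norm `‖f‖² = Σᵢ |fᵢ|²`. -/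
noncomputable def nsq {B : ℕ} (f : Fin B → ℂ) : ℝ :=
  ∑ i, Complex.normSq (f i)

/-- Zeroth-order symbol-estimate MSE of the ZF equalizer, deterministic channel `h`. -/
noncomputable def Mdc {B : ℕ} (σx2 σw2 : ℝ) (h : ℂ) (x f : Fin B → ℂ) : ℝ :=
  (σx2 * (Complex.normSq h * Complex.normSq (phi x f - 1) + σw2 * nsq f) + σw2) /
    (Complex.normSq h * Complex.normSq (phi x f) + σw2 * nsq f)

/-- Standard Gaussian tail function `Q(u) = (1/√(2π)) ∫_u^∞ e^{−t²/2} dt`. -/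
noncomputable def Qfun (u : ℝ) : ℝ :=
  (Real.sqrt (2 * Real.pi))⁻¹ * ∫ t in Set.Ioi u, Real.exp (-t ^ 2 / 2)

/-- Zeroth-order error probability `[P_e]₀ = a·Q(b·√(σx²/M_dc(f)))`. -/
noncomputable def P0dc {B : ℕ} (a b σx2 σw2 : ℝ) (h : ℂ) (x f : Fin B → ℂ) : ℝ :=
  a * Qfun (b * Real.sqrt (σx2 / Mdc σx2 σw2 h x f))

/-- The optimal filter `f_opt = (1 + σw²/(σx²·|h|²)) · x/‖x‖²`. -/
noncomputable def fOptDc {B : ℕ} (σx2 σw2 : ℝ) (h : ℂ) (x : Fin B → ℂ) : Fin B → ℂ :=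
  fun i => ((1 + σw2 / (σx2 * Complex.normSq h) : ℝ) : ℂ) * (x i / (nsq x : ℂ))

lemma nsq_nonneg {B : ℕ} (f : Fin B → ℂ) : 0 ≤ nsq f :=
  Finset.sum_nonneg fun _ _ => Complex.normSq_nonneg _

lemma nsq_pos {B : ℕ} {f : Fin B → ℂ} (hf : f ≠ 0) : 0 < nsq f := by
  obtain ⟨i, hi⟩ := Function.ne_iff.mp hf
  exact Finset.sum_pos' (fun j _ => Complex.normSq_nonneg _)
    ⟨i, Finset.mem_univ i, Complex.normSq_pos.mpr hi⟩

lemma cs_phi {B : ℕ} (x f : Fin B → ℂ) : Complex.normSq (phi x f) ≤ nsq f * nsq x := by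
  set F : EuclideanSpace ℂ (Fin B) := (WithLp.equiv 2 (Fin B → ℂ)).symm f
  set X : EuclideanSpace ℂ (Fin B) := (WithLp.equiv 2 (Fin B → ℂ)).symm x
  have h1 : phi x f = @inner ℂ (EuclideanSpace ℂ (Fin B)) _ F X := by
    simp [phi, PiLp.inner_apply, RCLike.inner_apply, F, X]
    exact Finset.sum_congr rfl fun i _ => mul_comm _ _
  have h2 := @norm_inner_le_norm ℂ (EuclideanSpace ℂ (Fin B)) _ _ _ F X
  have h3F : ‖F‖ ^ 2 = nsq f := by
    rw [EuclideanSpace.norm_eq, Real.sq_sqrt (Finset.sum_nonneg fun i _ => sq_nonneg _)]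
    simp [nsq, Complex.sq_norm, F]
  have h3X : ‖X‖ ^ 2 = nsq x := by
    rw [EuclideanSpace.norm_eq, Real.sq_sqrt (Finset.sum_nonneg fun i _ => sq_nonneg _)]
    simp [nsq, Complex.sq_norm, X]
  have h4 : Complex.normSq (phi x f) = ‖phi x f‖ ^ 2 := by
    rw [← Complex.sq_norm]
  rw [h4, h1, ← h3F, ← h3X]
  calc ‖@inner ℂ (EuclideanSpace ℂ (Fin B)) _ F X‖ ^ 2 ≤ (‖F‖ * ‖X‖)^2 :=
        pow_le_pow_left₀ (norm_nonneg _) h2 2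
    _ = _ := by ring

lemma phi_fopt {B : ℕ} (σx2 σw2 : ℝ) (h : ℂ) (x : Fin B → ℂ) (hX : nsq x ≠ 0) :
    phi x (fOptDc σx2 σw2 h x) = ((1 + σw2 / (σx2 * Complex.normSq h) : ℝ) : ℂ) := by
  simp only [phi, fOptDc, map_mul, map_div₀, Complex.conj_ofReal]
  have key : ∀ i : Fin B, ((1 + σw2 / (σx2 * Complex.normSq h) : ℝ) : ℂ) *
      ((starRingEnd ℂ) (x i) / ((nsq x : ℝ) : ℂ)) * x i
      = ((1 + σw2 / (σx2 * Complex.normSq h) : ℝ) : ℂ) / ((nsq x : ℝ) : ℂ) *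
        ((Complex.normSq (x i) : ℝ) : ℂ) := by
    intro i
    rw [Complex.normSq_eq_conj_mul_self]
    ring
  rw [Finset.sum_congr rfl fun i _ => key i, ← Finset.mul_sum, ← Complex.ofReal_sum]
  rw [show (∑ i, Complex.normSq (x i)) = nsq x from rfl]
  rw [div_mul_cancel₀]
  exact_mod_cast hX

lemma nsq_fopt {B : ℕ} (σx2 σw2 : ℝ) (h : ℂ) (x : Fin B → ℂ) (hX : nsq x ≠ 0) :
    nsq (fOptDc σx2 σw2 h x) = (1 + σw2 / (σx2 * Complex.normSq h))^2 / nsq x := by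
  set t := 1 + σw2 / (σx2 * Complex.normSq h) with ht
  simp only [nsq, fOptDc, Complex.normSq_mul, Complex.normSq_div, Complex.normSq_ofReal]
  set S := ∑ i, Complex.normSq (x i) with hS
  have hS0 : S ≠ 0 := hX
  have key : ∀ i : Fin B, t * t * (Complex.normSq (x i) / (S * S))
      = t * t / (S * S) * Complex.normSq (x i) := fun i => by ring
  rw [Finset.sum_congr rfl fun i _ => key i, ← Finset.mul_sum, ← hS]
  show t * t / (S * S) * S = t ^ 2 / S
  field_simp

lemma exp_gauss_integrable : MeasureTheory.Integrable (fun t : ℝ => Real.exp (-t^2/2)) := by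
  have h := integrable_exp_neg_mul_sq (show (0:ℝ) < 1/2 by norm_num)
  have : (fun t : ℝ => Real.exp (-t^2/2)) = fun t : ℝ => Real.exp (-(1/2) * t^2) := by
    funext t; congr 1; ring
  rw [this]; exact h

lemma Qfun_anti {u v : ℝ} (huv : u ≤ v) : Qfun v ≤ Qfun u := by
  unfold Qfun
  apply mul_le_mul_of_nonneg_left _ (inv_nonneg.mpr (Real.sqrt_nonneg _))
  apply setIntegral_mono_set exp_gauss_integrable.integrableOn
  · filter_upwards with t using (Real.exp_pos _).le
  · exact HasSubset.Subset.eventuallyLE (Set.Ioi_subset_Ioi huv)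

lemma Mdc_pos {B : ℕ} {σx2 σw2 : ℝ} (hσx : 0 < σx2) (hσw : 0 < σw2)
    (h : ℂ) (x : Fin B → ℂ) {f : Fin B → ℂ} (hf : f ≠ 0) :
    0 < Mdc σx2 σw2 h x f := by
  unfold Mdc
  apply div_pos
  · have h1 : 0 ≤ σx2 * (Complex.normSq h * Complex.normSq (phi x f - 1) + σw2 * nsq f) :=
      mul_nonneg hσx.le (add_nonneg (mul_nonneg (Complex.normSq_nonneg _) (Complex.normSq_nonneg _))
        (mul_nonneg hσw.le (nsq_nonneg f)))
    linarith
  · have h1 : 0 ≤ Complex.normSq h * Complex.normSq (phi x f) :=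
      mul_nonneg (Complex.normSq_nonneg _) (Complex.normSq_nonneg _)
    have h2 : 0 < σw2 * nsq f := mul_pos hσw (nsq_pos hf)
    linarith

set_option maxHeartbeats 2000000 in
lemma Mdc_fopt_le {B : ℕ} {x : Fin B → ℂ} (hx : x ≠ 0)
    {σx2 σw2 : ℝ} (hσx : 0 < σx2) (hσw : 0 < σw2)
    {h : ℂ} (hh : h ≠ 0) {f : Fin B → ℂ} (hf : f ≠ 0) :
    Mdc σx2 σw2 h x (fOptDc σx2 σw2 h x) ≤ Mdc σx2 σw2 h x f := by
  have hc : 0 < Complex.normSq h := Complex.normSq_pos.mpr hh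
  have hX : 0 < nsq x := nsq_pos hx
  set c := Complex.normSq h with hcdef
  set X := nsq x with hXdef
  set t := 1 + σw2 / (σx2 * c) with htdef
  have ht : 0 < t := by
    have : 0 < σw2 / (σx2 * c) := div_pos hσw (mul_pos hσx hc)
    rw [htdef]; linarith
  have hkey : σx2 * c * t = σx2 * c + σw2 := by
    have hne : σx2 * c ≠ 0 := (mul_pos hσx hc).ne'
    rw [htdef, mul_add, mul_one, mul_div_cancel₀ _ hne]
  set n := nsq f with hndef
  have hn : 0 < n := nsq_pos hf
  set p := phi x f with hpdef
  set q := Complex.normSq p with hqdef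
  set r := p.re with hrdef
  have hq0 : 0 ≤ q := Complex.normSq_nonneg _
  have hr2 : r ^ 2 ≤ q := by
    rw [hqdef, Complex.normSq_apply]
    nlinarith [sq_nonneg p.im]
  have hcs : q ≤ n * X := cs_phi x f
  have hps : Complex.normSq (p - 1) = q - 2 * r + 1 := by
    rw [hqdef]
    simp [Complex.normSq_apply, Complex.sub_re, Complex.sub_im, hrdef]
    ring
  have hMo : Mdc σx2 σw2 h x (fOptDc σx2 σw2 h x) =
      (σx2 * (c * (t - 1) ^ 2 + σw2 * (t ^ 2 / X)) + σw2) /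
        (c * t ^ 2 + σw2 * (t ^ 2 / X)) := by
    rw [Mdc, phi_fopt σx2 σw2 h x hX.ne', nsq_fopt σx2 σw2 h x hX.ne']
    have e1 : ((1 + σw2 / (σx2 * c) : ℝ) : ℂ) - 1 = ((t - 1 : ℝ) : ℂ) := by
      rw [htdef]; push_cast; ring
    rw [e1, Complex.normSq_ofReal, Complex.normSq_ofReal]
    rw [show (1 + σw2 / (σx2 * Complex.normSq h)) = t from rfl]
    rw [← hcdef, ← hXdef]
    ring_nf
  have hMf : Mdc σx2 σw2 h x f =
      (σx2 * (c * (q - 2 * r + 1) + σw2 * n) + σw2) / (c * q + σw2 * n) := by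
    rw [Mdc, ← hpdef, hps, ← hqdef, ← hndef]
  rw [hMo, hMf]
  have hDo : 0 < c * t ^ 2 + σw2 * (t ^ 2 / X) :=
    add_pos (mul_pos hc (pow_pos ht 2)) (mul_pos hσw (div_pos (pow_pos ht 2) hX))
  have hDf : 0 < c * q + σw2 * n := by
    have := mul_nonneg hc.le hq0
    nlinarith [mul_pos hσw hn]
  rw [div_le_div_iff₀ hDo hDf]
  refine le_of_mul_le_mul_right ?_ hX
  have e1 : (σx2 * (c * (t - 1) ^ 2 + σw2 * (t ^ 2 / X)) + σw2) * (c * q + σw2 * n) * X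
      = (σx2 * (c * (t - 1) ^ 2 * X + σw2 * t ^ 2) + σw2 * X) * (c * q + σw2 * n) := by
    field_simp
  have e2 : (σx2 * (c * (q - 2 * r + 1) + σw2 * n) + σw2) * (c * t ^ 2 + σw2 * (t ^ 2 / X)) * X
      = (σx2 * (c * (q - 2 * r + 1) + σw2 * n) + σw2) * (c * t ^ 2 * X + σw2 * t ^ 2) := by
    field_simp
  rw [e1, e2]
  have hkey2 : σx2 * c + σw2 - σx2 * c * t = 0 := by rw [hkey]; ring
  have T1 : 0 ≤ t * ((c * X + σw2) * (σx2 * c)) * (t - r) ^ 2 :=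
    mul_nonneg (mul_nonneg ht.le (mul_nonneg (by nlinarith) (mul_nonneg hσx.le hc.le)))
      (sq_nonneg _)
  have T2 : 0 ≤ t * ((c * X + σw2) * (σx2 * c)) * (q - r ^ 2) :=
    mul_nonneg (mul_nonneg ht.le (mul_nonneg (by nlinarith) (mul_nonneg hσx.le hc.le)))
      (by linarith)
  have T3 : 0 ≤ t * (σx2 * c) * σw2 * (n * X - q) :=
    mul_nonneg (mul_nonneg (mul_nonneg ht.le (mul_nonneg hσx.le hc.le)) hσw.le) (by linarith)
  have hid : (σx2 * (c * (q - 2 * r + 1) + σw2 * n) + σw2) * (c * t ^ 2 * X + σw2 * t ^ 2)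
      - (σx2 * (c * (t - 1) ^ 2 * X + σw2 * t ^ 2) + σw2 * X) * (c * q + σw2 * n)
      = t * ((c * X + σw2) * (σx2 * c)) * (t - r) ^ 2
        + t * ((c * X + σw2) * (σx2 * c)) * (q - r ^ 2)
        + t * (σx2 * c) * σw2 * (n * X - q)
        + (σx2 * c + σw2 - σx2 * c * t) * (t ^ 2 * (c * X + σw2) - X * (c * q + σw2 * n)) := by
    ring
  have hid2 : (σx2 * c + σw2 - σx2 * c * t) * (t ^ 2 * (c * X + σw2) - X * (c * q + σw2 * n)) = 0 := by
    rw [hkey2]; ring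
  linarith [hid, T1, T2, T3, hid2]

/-- `f_opt = (1 + σw²/(σx²·|h|²)) · x/‖x‖²` minimizes the zeroth-order error
probability `[P_e]₀`. -/
theorem fopt_optimal_zeroth_order_pe
    (B : ℕ) (hB : 1 ≤ B) (x : Fin B → ℂ) (hx : x ≠ 0)
    (σx2 σw2 : ℝ) (hσx : 0 < σx2) (hσw : 0 < σw2)
    (h : ℂ) (hh : h ≠ 0) (a b : ℝ) (ha : 0 < a) (hb : 0 < b) :
    ∀ f : Fin B → ℂ, f ≠ 0 →
      P0dc a b σx2 σw2 h x (fOptDc σx2 σw2 h x) ≤ P0dc a b σx2 σw2 h x f := by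
  intro f hf
  have hMpos_f : 0 < Mdc σx2 σw2 h x f := Mdc_pos hσx hσw h x hf
  have hfopt_ne : fOptDc σx2 σw2 h x ≠ 0 := by
    intro h0
    have hnf := nsq_fopt σx2 σw2 h x (nsq_pos hx).ne'
    rw [h0] at hnf
    have h1 : nsq (0 : Fin B → ℂ) = 0 := by simp [nsq]
    have ht : 0 < 1 + σw2 / (σx2 * Complex.normSq h) := by
      have : 0 < σw2 / (σx2 * Complex.normSq h) :=
        div_pos hσw (mul_pos hσx (Complex.normSq_pos.mpr hh))
      linarith
    have hX : 0 < nsq x := nsq_pos hx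
    rw [h1] at hnf
    have h2 : (0:ℝ) < (1 + σw2 / (σx2 * Complex.normSq h))^2 / nsq x :=
      div_pos (pow_pos ht 2) hX
    linarith [h2]
  have hMpos_o : 0 < Mdc σx2 σw2 h x (fOptDc σx2 σw2 h x) := Mdc_pos hσx hσw h x hfopt_ne
  have hM : Mdc σx2 σw2 h x (fOptDc σx2 σw2 h x) ≤ Mdc σx2 σw2 h x f :=
    Mdc_fopt_le hx hσx hσw hh hf
  unfold P0dc
  apply mul_le_mul_of_nonneg_left _ ha.le
  apply Qfun_anti
  apply mul_le_mul_of_nonneg_left _ hb.le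
  apply Real.sqrt_le_sqrt
  exact div_le_div_of_nonneg_left hσx.le hMpos_o hM
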